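/- Let (H, (Uᵗ)_{t∈ℤ}, D) be a smooth discrete-time quantum walk and ξ a smooth unit vector. For every real L > ‖[D,U]‖, lim_{t→∞} p_t((−∞, −L] ∪ [L, ∞)) = 0. Consequently, if the weak limit of p_t exists, its support is contained in [−‖[D,U]‖, ‖[D,U]‖] and in particular is compact. -/

import Mathlib

open scoped InnerProductSpace
open MeasureTheory Filter

section QWAux

variable {H : Type*} [NormedAddCommGroup H] [InnerProductSpace ℂ H] [CompleteSpace H]
variable (D : H →ₗ.[ℂ] H) (u : ℕ → (H →L[ℂ] H))

/-- `QWDval D x y` means `x` is in the domain of `D` and `D x = y`. -/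
def QWDval (x y : H) : Prop := ∃ h : x ∈ D.domain, D ⟨x, h⟩ = y

variable {D}

lemma QWDval.unique {x y y' : H} (h : QWDval D x y) (h' : QWDval D x y') : y = y' := by
  obtain ⟨hx, rfl⟩ := h; obtain ⟨hx', rfl⟩ := h'; rfl

lemma QWDval.add {x y x' y' : H} (h : QWDval D x y) (h' : QWDval D x' y') :
    QWDval D (x + x') (y + y') := by
  obtain ⟨hx, rfl⟩ := h; obtain ⟨hx', rfl⟩ := h'
  refine ⟨D.domain.add_mem hx hx', ?_⟩
  have : (⟨x + x', D.domain.add_mem hx hx'⟩ : D.domain) = ⟨x, hx⟩ + ⟨x', hx'⟩ := rfl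
  rw [this, D.map_add]

lemma QWDval.smulr (r : ℝ) {x y : H} (h : QWDval D x y) : QWDval D (r • x) (r • y) := by
  obtain ⟨hx, rfl⟩ := h
  have hx' : r • x ∈ D.domain := by
    have := D.domain.smul_mem (r : ℂ) hx
    rwa [Complex.coe_smul] at this
  refine ⟨hx', ?_⟩
  have : (⟨r • x, hx'⟩ : D.domain) = (r : ℂ) • ⟨x, hx⟩ := Subtype.ext (Complex.coe_smul r x).symm
  rw [this, D.map_smul, Complex.coe_smul]

lemma QWDval.zero : QWDval D (0 : H) 0 :=
  ⟨D.domain.zero_mem, by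
    have : (⟨(0 : H), D.domain.zero_mem⟩ : D.domain) = 0 := rfl
    rw [this, D.map_zero]⟩

lemma QWDval.sum {ι : Type*} (s : Finset ι) (x y : ι → H)
    (h : ∀ i ∈ s, QWDval D (x i) (y i)) :
    QWDval D (∑ i ∈ s, x i) (∑ i ∈ s, y i) := by
  classical
  induction s using Finset.induction_on with
  | empty => simpa using QWDval.zero
  | insert _ _ hnm ih =>
    rename_i a s'
    rw [Finset.sum_insert hnm, Finset.sum_insert hnm]
    exact (h a (Finset.mem_insert_self a s')).add
      (ih fun i hi => h i (Finset.mem_insert_of_mem hi))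

/-- The word operator: apply `u (f 0)`, …, `u (f (t-1))` from the inside out. -/
noncomputable def QWwd : ℕ → (ℕ → ℕ) → (H →L[ℂ] H)
  | 0, _ => 1
  | (t + 1), f => QWwd t f * u (f t)

lemma QWwd_congr {t : ℕ} {f g : ℕ → ℕ} (h : ∀ i < t, f i = g i) :
    QWwd u t f = QWwd u t g := by
  induction t with
  | zero => rfl
  | succ t ih =>
    show QWwd u t f * u (f t) = QWwd u t g * u (g t)
    rw [ih fun i hi => h i (Nat.lt_succ_of_lt hi), h t (Nat.lt_succ_self t)]

lemma QWwd_zero_fun (t : ℕ) : QWwd u t (fun _ => 0) = (u 0) ^ t := by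
  induction t with
  | zero => rfl
  | succ t ih => show QWwd u t _ * u 0 = _; rw [ih, pow_succ]

/-- Increment `f` at position `i`. -/
def QWinc (f : ℕ → ℕ) (i : ℕ) : ℕ → ℕ := fun j => f j + if j = i then 1 else 0

lemma QWwd_deriv
    (hcm : ∀ (m : ℕ) (x y : H), QWDval D x y → QWDval D (u m x) (u m y + u (m + 1) x))
    (t : ℕ) (f : ℕ → ℕ) {x y : H} (hxy : QWDval D x y) :
    QWDval D (QWwd u t f x)
      (QWwd u t f y + ∑ i ∈ Finset.range t, QWwd u t (QWinc f i) x) := by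
  induction t generalizing f x y with
  | zero => simpa [QWwd] using hxy
  | succ t ih =>
    have h1 := hcm (f t) x y hxy
    have h2 := ih f h1
    -- rewrite the pieces
    have e0 : QWwd u (t + 1) f x = QWwd u t f (u (f t) x) := rfl
    have e1 : QWwd u t f (u (f t) y + u (f t + 1) x)
        = QWwd u (t + 1) f y + QWwd u t f (u (f t + 1) x) := by
      rw [map_add]; rfl
    have e2 : QWwd u t f (u (f t + 1) x) = QWwd u (t + 1) (QWinc f t) x := by
      show _ = (QWwd u t (QWinc f t) * u (QWinc f t t)) x
      have : QWinc f t t = f t + 1 := by simp [QWinc]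
      rw [this]
      have : QWwd u t (QWinc f t) = QWwd u t f := by
        refine QWwd_congr u fun i hi => ?_
        simp [QWinc, Nat.ne_of_lt hi]
      rw [this]; rfl
    have e3 : ∀ i ∈ Finset.range t,
        QWwd u t (QWinc f i) (u (f t) x) = QWwd u (t + 1) (QWinc f i) x := by
      intro i hi
      show _ = (QWwd u t (QWinc f i) * u (QWinc f i t)) x
      have : QWinc f i t = f t := by
        simp [QWinc, Nat.ne_of_gt (Finset.mem_range.mp hi)]
      rw [this]; rfl
    rw [e0]
    convert h2 using 1
    rw [e1, e2, Finset.sum_congr rfl e3, Finset.sum_range_succ]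
    abel

/-- Multiplicity function of `s : Fin k → Fin t`. -/
def QWff {k t : ℕ} (s : Fin k → Fin t) : ℕ → ℕ := fun i =>
  (Finset.univ.filter fun j => (s j : ℕ) = i).card

lemma QWff_cons {k t : ℕ} (i₀ : Fin t) (s : Fin k → Fin t) :
    QWff (Fin.cons i₀ s) = QWinc (QWff s) (i₀ : ℕ) := by
  funext i
  simp only [QWff, QWinc, Finset.card_filter]
  rw [Fin.sum_univ_succ]
  simp only [Fin.cons_zero, Fin.cons_succ]
  rw [add_comm]
  congr 1
  by_cases h : (i₀ : ℕ) = i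
  · simp [h]
  · simp [h, Ne.symm h]

lemma QWff_sum {k t : ℕ} (s : Fin k → Fin t) :
    ∑ i ∈ Finset.range t, QWff s i = k := by
  simp only [QWff, Finset.card_filter]
  rw [Finset.sum_comm]
  have : ∀ j : Fin k, (∑ i ∈ Finset.range t, if (s j : ℕ) = i then 1 else 0) = 1 := by
    intro j
    rw [Finset.sum_ite_eq (Finset.range t) ((s j : ℕ)) (fun _ => 1)]
    simp [Finset.mem_range.mpr (s j).is_lt]
  simp [this]

lemma QWff_le {k t : ℕ} (s : Fin k → Fin t) (i : ℕ) : QWff s i ≤ k :=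
  le_trans (Finset.card_filter_le _ _) (by simp)

lemma QWff_le_one {k t : ℕ} {s : Fin k → Fin t} (hs : Function.Injective s) (i : ℕ) :
    QWff s i ≤ 1 := by
  refine Finset.card_le_one.mpr fun j1 h1 j2 h2 => ?_
  simp only [Finset.mem_filter] at h1 h2
  exact hs (Fin.ext (h1.2.trans h2.2.symm))

/-- The `k`-th correction vector at time `t`. -/
noncomputable def QWT (t k : ℕ) (x : H) : H := ∑ s : Fin k → Fin t, QWwd u t (QWff s) x

lemma QWT_zero (t : ℕ) (x : H) : QWT u t 0 x = ((u 0) ^ t) x := by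
  rw [QWT]
  rw [Fintype.sum_unique]
  have : QWff (default : Fin 0 → Fin t) = fun _ => 0 := by
    funext i; simp [QWff]
  rw [this, QWwd_zero_fun]

lemma QWT_deriv
    (hcm : ∀ (m : ℕ) (x y : H), QWDval D x y → QWDval D (u m x) (u m y + u (m + 1) x))
    (t k : ℕ) {x y : H} (hxy : QWDval D x y) :
    QWDval D (QWT u t k x) (QWT u t k y + QWT u t (k + 1) x) := by
  have h := QWDval.sum (Finset.univ : Finset (Fin k → Fin t))
    (fun s => QWwd u t (QWff s) x)
    (fun s => QWwd u t (QWff s) y + ∑ i ∈ Finset.range t, QWwd u t (QWinc (QWff s) i) x)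
    (fun s _ => QWwd_deriv u hcm t (QWff s) hxy)
  have e : ∑ s : Fin k → Fin t,
      (QWwd u t (QWff s) y + ∑ i ∈ Finset.range t, QWwd u t (QWinc (QWff s) i) x)
      = QWT u t k y + QWT u t (k + 1) x := by
    rw [Finset.sum_add_distrib]
    congr 1
    rw [QWT]
    have heq := Fintype.sum_equiv (Fin.consEquiv fun _ : Fin (k + 1) => Fin t)
      (fun p : Fin t × (Fin k → Fin t) => QWwd u t (QWff (Fin.cons p.1 p.2)) x)
      (fun s : Fin (k + 1) → Fin t => QWwd u t (QWff s) x)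
      (fun p => rfl)
    have h2 : (∑ p : Fin t × (Fin k → Fin t), QWwd u t (QWff (Fin.cons p.1 p.2)) x)
        = ∑ i₀ : Fin t, ∑ s : Fin k → Fin t, QWwd u t (QWff (Fin.cons i₀ s)) x :=
      Fintype.sum_prod_type (f := fun p : Fin t × (Fin k → Fin t) => QWwd u t (QWff (Fin.cons p.1 p.2)) x)
    have h3 : (∑ i₀ : Fin t, ∑ s : Fin k → Fin t, QWwd u t (QWff (Fin.cons i₀ s)) x)
        = ∑ s : Fin k → Fin t, ∑ i₀ : Fin t, QWwd u t (QWff (Fin.cons i₀ s)) x :=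
      Finset.sum_comm
    rw [← heq, h2, h3]
    refine Finset.sum_congr rfl fun s _ => ?_
    rw [← Fin.sum_univ_eq_sum_range (fun i => QWwd u t (QWinc (QWff s) i) x) t]
    exact Finset.sum_congr rfl fun i₀ _ => by rw [QWff_cons]
  rw [e] at h
  exact h

lemma QWwd_norm {ν : ℕ → ℝ} (hν : ∀ (j : ℕ) (x : H), ‖u j x‖ ≤ ν j * ‖x‖)
    (hν0 : ∀ j, 0 ≤ ν j) (t : ℕ) (f : ℕ → ℕ) (x : H) :
    ‖QWwd u t f x‖ ≤ (∏ i ∈ Finset.range t, ν (f i)) * ‖x‖ := by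
  induction t generalizing x with
  | zero => simp [QWwd]
  | succ t ih =>
    have e : QWwd u (t + 1) f x = QWwd u t f (u (f t) x) := rfl
    rw [e, Finset.prod_range_succ]
    calc ‖QWwd u t f (u (f t) x)‖ ≤ (∏ i ∈ Finset.range t, ν (f i)) * ‖u (f t) x‖ := ih _
      _ ≤ (∏ i ∈ Finset.range t, ν (f i)) * (ν (f t) * ‖x‖) := by
          exact mul_le_mul_of_nonneg_left (hν _ _) (Finset.prod_nonneg fun i _ => hν0 _)
      _ = (∏ i ∈ Finset.range t, ν (f i)) * ν (f t) * ‖x‖ := by ring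

lemma QW_card_inj (k t : ℕ) :
    ((Finset.univ : Finset (Fin k → Fin t)).filter
      (fun s => Function.Injective s)).card = t.descFactorial k := by
  classical
  rw [← Fintype.card_subtype]
  rw [Fintype.card_congr (Equiv.subtypeInjectiveEquivEmbedding (Fin k) (Fin t))]
  rw [Fintype.card_embedding_eq]
  simp

lemma QWT_norm {ν : ℕ → ℝ} (hν : ∀ (j : ℕ) (x : H), ‖u j x‖ ≤ ν j * ‖x‖)
    (hν0 : ∀ j, 0 ≤ ν j) {a M : ℝ} (ha : 0 ≤ a) (hM : 0 ≤ M) (t k : ℕ)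
    (hν1 : ∀ j ≤ 1, ν j ≤ a ^ j) (hνk : ∀ j ≤ k, ν j ≤ M ^ j) (x : H) :
    ‖QWT u t k x‖ ≤ ((t.descFactorial k : ℝ) * a ^ k
      + ((t ^ k - t.descFactorial k : ℕ) : ℝ) * M ^ k) * ‖x‖ := by
  classical
  calc ‖QWT u t k x‖ ≤ ∑ s : Fin k → Fin t, ‖QWwd u t (QWff s) x‖ :=
        norm_sum_le _ _
    _ ≤ ∑ s : Fin k → Fin t, (∏ i ∈ Finset.range t, ν (QWff s i)) * ‖x‖ :=
        Finset.sum_le_sum fun s _ => QWwd_norm u hν hν0 t (QWff s) x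
    _ = (∑ s : Fin k → Fin t, ∏ i ∈ Finset.range t, ν (QWff s i)) * ‖x‖ := by
        rw [Finset.sum_mul]
    _ ≤ ((t.descFactorial k : ℝ) * a ^ k
        + ((t ^ k - t.descFactorial k : ℕ) : ℝ) * M ^ k) * ‖x‖ := by
      refine mul_le_mul_of_nonneg_right ?_ (norm_nonneg x)
      rw [← Finset.sum_filter_add_sum_filter_not Finset.univ
        (fun s : Fin k → Fin t => Function.Injective s)]
      have hgood : ∀ s : Fin k → Fin t, Function.Injective s →
          (∏ i ∈ Finset.range t, ν (QWff s i)) ≤ a ^ k := by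
        intro s hs
        calc (∏ i ∈ Finset.range t, ν (QWff s i))
            ≤ ∏ i ∈ Finset.range t, a ^ (QWff s i) :=
              Finset.prod_le_prod (fun i _ => hν0 _)
                (fun i _ => hν1 _ (QWff_le_one hs i))
          _ = a ^ (∑ i ∈ Finset.range t, QWff s i) := by
              rw [Finset.prod_pow_eq_pow_sum]
          _ = a ^ k := by rw [QWff_sum]
      have hbad : ∀ s : Fin k → Fin t,
          (∏ i ∈ Finset.range t, ν (QWff s i)) ≤ M ^ k := by
        intro s
        calc (∏ i ∈ Finset.range t, ν (QWff s i))
            ≤ ∏ i ∈ Finset.range t, M ^ (QWff s i) :=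
              Finset.prod_le_prod (fun i _ => hν0 _)
                (fun i _ => hνk _ (QWff_le s i))
          _ = M ^ (∑ i ∈ Finset.range t, QWff s i) := by
              rw [Finset.prod_pow_eq_pow_sum]
          _ = M ^ k := by rw [QWff_sum]
      have c1 : (∑ s ∈ Finset.univ.filter
            (fun s : Fin k → Fin t => Function.Injective s),
            ∏ i ∈ Finset.range t, ν (QWff s i)) ≤ (t.descFactorial k : ℝ) * a ^ k := by
        calc _ ≤ ∑ _s ∈ Finset.univ.filter
              (fun s : Fin k → Fin t => Function.Injective s), a ^ k :=
            Finset.sum_le_sum fun s hs => hgood s (Finset.mem_filter.mp hs).2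
          _ = (t.descFactorial k : ℝ) * a ^ k := by
            rw [Finset.sum_const, QW_card_inj, nsmul_eq_mul]
      have c2 : (∑ s ∈ Finset.univ.filter
            (fun s : Fin k → Fin t => ¬ Function.Injective s),
            ∏ i ∈ Finset.range t, ν (QWff s i))
            ≤ ((t ^ k - t.descFactorial k : ℕ) : ℝ) * M ^ k := by
        calc _ ≤ ∑ _s ∈ Finset.univ.filter
              (fun s : Fin k → Fin t => ¬ Function.Injective s), M ^ k :=
            Finset.sum_le_sum fun s _ => hbad s
          _ = ((t ^ k - t.descFactorial k : ℕ) : ℝ) * M ^ k := by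
            rw [Finset.sum_const, nsmul_eq_mul]
            congr 2
            have hcard := Finset.card_filter_add_card_filter_not
              (s := (Finset.univ : Finset (Fin k → Fin t)))
              (p := fun s : Fin k → Fin t => Function.Injective s)
            rw [QW_card_inj] at hcard
            have huniv : (Finset.univ : Finset (Fin k → Fin t)).card = t ^ k := by
              rw [Finset.card_univ, Fintype.card_fun]
              simp
            omega
      exact add_le_add c1 c2

lemma QW_pow_le_descFactorial_add (t k : ℕ) :
    t ^ k ≤ t.descFactorial k + k ^ 2 * t ^ (k - 1) := by
  induction k with
  | zero => simp
  | succ k ih =>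
    cases k with
    | zero => simpa using Nat.le_refl t |>.trans (Nat.le_add_right t 1)
    | succ n =>
      set m := n + 1 with hm
      have h1 : t ^ (m + 1) = t * t ^ m := by ring
      have h2 : t * t ^ (m - 1) = t ^ m := by
        have : m - 1 + 1 = m := by omega
        rw [← pow_succ', this]
      have h3 : t * t ^ m ≤ t * t.descFactorial m + m ^ 2 * (t * t ^ (m - 1)) := by
        calc t * t ^ m ≤ t * (t.descFactorial m + m ^ 2 * t ^ (m - 1)) :=
              Nat.mul_le_mul_left t ih
          _ = t * t.descFactorial m + m ^ 2 * (t * t ^ (m - 1)) := by ring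
      have h4 : t * t.descFactorial m ≤ (t - m) * t.descFactorial m + m * t ^ m := by
        have : t * t.descFactorial m ≤ ((t - m) + m) * t.descFactorial m :=
          Nat.mul_le_mul_right _ (by omega)
        calc t * t.descFactorial m ≤ ((t - m) + m) * t.descFactorial m := this
          _ = (t - m) * t.descFactorial m + m * t.descFactorial m := by ring
          _ ≤ (t - m) * t.descFactorial m + m * t ^ m :=
            Nat.add_le_add_left (Nat.mul_le_mul_left m (Nat.descFactorial_le_pow t m)) _
      calc t ^ (m + 1) = t * t ^ m := h1
        _ ≤ t * t.descFactorial m + m ^ 2 * (t * t ^ (m - 1)) := h3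
        _ = t * t.descFactorial m + m ^ 2 * t ^ m := by rw [h2]
        _ ≤ (t - m) * t.descFactorial m + m * t ^ m + m ^ 2 * t ^ m := by
            exact Nat.add_le_add_right h4 _
        _ ≤ t.descFactorial (m + 1) + (m + 1) ^ 2 * t ^ (m + 1 - 1) := by
            rw [Nat.descFactorial_succ]
            have : m + 1 - 1 = m := by omega
            rw [this]
            have hmm : m * t ^ m + m ^ 2 * t ^ m ≤ (m + 1) ^ 2 * t ^ m := by
              have h5 : m + m ^ 2 ≤ (m + 1) ^ 2 := by nlinarith
              calc m * t ^ m + m ^ 2 * t ^ m = (m + m ^ 2) * t ^ m := by ring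
                _ ≤ (m + 1) ^ 2 * t ^ m := Nat.mul_le_mul_right _ h5
            calc (t - m) * t.descFactorial m + m * t ^ m + m ^ 2 * t ^ m
                = (t - m) * t.descFactorial m + (m * t ^ m + m ^ 2 * t ^ m) := by ring
              _ ≤ (t - m) * t.descFactorial m + (m + 1) ^ 2 * t ^ m :=
                  Nat.add_le_add_left hmm _

end QWAux

set_option maxHeartbeats 3000000 in
/-- For a smooth discrete-time quantum walk `(H, (Uᵗ), D)` and a smooth unit
vector `ξ`, with `p t` the rescaled position distribution at time `t`, for every real
`L > ‖[D,U]‖` one has `p_t((-∞,-L] ∪ [L,∞)) → 0`.  Consequently, if `p_t` converges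
weakly to a probability measure `q`, then `q` is supported in
`[-‖[D,U]‖, ‖[D,U]‖]` (in particular its support is compact).  Here `u 1 = [D,U]` is the
bounded commutator coming from smoothness. -/
theorem rescaled_distribution_escapes_compl_of_commutator_ball
    {H : Type*} [NormedAddCommGroup H] [InnerProductSpace ℂ H] [CompleteSpace H]
    (D : H →ₗ.[ℂ] H) (hD : IsSelfAdjoint D)
    (U : H →L[ℂ] H) (hU : U ∈ unitary (H →L[ℂ] H))
    (u : ℕ → (H →L[ℂ] H)) (hu0 : u 0 = U)
    (hu : ∀ (m : ℕ) (ξ : D.domain), ∃ h : u m (ξ : H) ∈ D.domain,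
      u (m + 1) (ξ : H) = D ⟨u m (ξ : H), h⟩ - u m (D ξ))
    (ξ : H) (hξ : ‖ξ‖ = 1)
    (c : ℕ → ℕ → H)
    (hc0 : ∀ t : ℕ, c t 0 = (U ^ t) ξ)
    (hc : ∀ t m : ℕ, ∃ h : c t m ∈ D.domain, c t (m + 1) = D ⟨c t m, h⟩)
    (p : ℕ → Measure ℝ)
    (hp : ∀ t, IsProbabilityMeasure (p t))
    (hpint : ∀ t m : ℕ, Integrable (fun v : ℝ => v ^ m) (p t))
    (hmom : ∀ t m : ℕ, 0 < t → ∫ v, v ^ m ∂(p t) =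
      (⟪(((t : ℝ) ^ m)⁻¹ : ℝ) • c t m, (U ^ t) ξ⟫_ℂ).re) :
    (∀ L : ℝ, ‖u 1‖ < L →
      Tendsto (fun t : ℕ => p t (Set.Iic (-L) ∪ Set.Ici L)) atTop (nhds 0)) ∧
    (∀ q : Measure ℝ, IsProbabilityMeasure q →
      (∀ f : BoundedContinuousFunction ℝ ℝ,
        Tendsto (fun t : ℕ => ∫ v, f v ∂(p t)) atTop (nhds (∫ v, f v ∂q))) →
      q (Set.Icc (-‖u 1‖) ‖u 1‖)ᶜ = 0) := by
  classical
  have hval : ∀ t m : ℕ, QWDval D (c t m) (c t (m + 1)) :=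
    fun t m => (hc t m).elim fun h he => ⟨h, he.symm⟩
  have hcm : ∀ (m : ℕ) (x y : H), QWDval D x y → QWDval D (u m x) (u m y + u (m + 1) x) := by
    rintro m x y ⟨hx, hDx⟩
    obtain ⟨h, he⟩ := hu m ⟨x, hx⟩
    refine ⟨h, ?_⟩
    have h2 : D ⟨u m x, h⟩ = u (m + 1) x + u m (D ⟨x, hx⟩) := by
      have := sub_eq_iff_eq_add.mp he.symm
      exact this
    rw [h2, hDx, add_comm]
  have hUn : ∀ x : H, ‖U x‖ = ‖x‖ := fun x =>
    ContinuousLinearMap.norm_map_of_mem_unitary hU x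
  set a : ℝ := ‖u 1‖ with ha_def
  have ha0 : 0 ≤ a := norm_nonneg _
  set ν : ℕ → ℝ := fun j => if j = 0 then 1 else ‖u j‖ with hν_def
  have hν0 : ∀ j, 0 ≤ ν j := fun j => by
    by_cases h : j = 0 <;> simp [hν_def, h]
  have hν : ∀ (j : ℕ) (x : H), ‖u j x‖ ≤ ν j * ‖x‖ := by
    intro j x
    by_cases h : j = 0
    · subst h; rw [hu0]; simp [hν_def, hUn x]
    · simp only [hν_def, if_neg h]; exact (u j).le_opNorm x
  have hν1 : ∀ j ≤ 1, ν j ≤ a ^ j := by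
    intro j hj
    interval_cases j <;> simp [hν_def, ha_def]
  have hc00 : c 0 0 = ξ := by rw [hc0 0]; simp
  -- the binomial-type expansion of `c t m` in correction operators
  have hexp : ∀ m t : ℕ, c t m
      = ∑ k ∈ Finset.range (m + 1), ((m.choose k : ℝ)) • QWT u t k (c 0 (m - k)) := by
    intro m
    induction m with
    | zero =>
      intro t
      rw [Finset.sum_range_one]
      simp only [Nat.choose_self, Nat.cast_one, one_smul, Nat.sub_zero]
      rw [QWT_zero, hc00, hu0, hc0 t]
    | succ m ih =>
      intro t
      have h2 := QWDval.sum (D := D) (Finset.range (m + 1))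
        (fun k => (m.choose k : ℝ) • QWT u t k (c 0 (m - k)))
        (fun k => (m.choose k : ℝ) •
          (QWT u t k (c 0 (m - k + 1)) + QWT u t (k + 1) (c 0 (m - k))))
        (fun k _ => (QWT_deriv u hcm t k (hval 0 (m - k))).smulr _)
      rw [← ih t] at h2
      rw [(hval t m).unique h2]
      -- now pure algebra with binomial coefficients
      have e1 : ∀ k ∈ Finset.range (m + 1),
          (m.choose k : ℝ) • (QWT u t k (c 0 (m - k + 1)) + QWT u t (k + 1) (c 0 (m - k)))
          = (m.choose k : ℝ) • QWT u t k (c 0 (m + 1 - k))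
            + (m.choose k : ℝ) • QWT u t (k + 1) (c 0 (m - k)) := by
        intro k hk
        have hk' : k ≤ m := Nat.lt_succ_iff.mp (Finset.mem_range.mp hk)
        have : m - k + 1 = m + 1 - k := by omega
        rw [smul_add, this]
      rw [Finset.sum_congr rfl e1, Finset.sum_add_distrib]
      rw [Finset.sum_range_succ'
        (fun k => (((m + 1).choose k : ℕ) : ℝ) • QWT u t k (c 0 (m + 1 - k))) (m + 1)]
      rw [Finset.sum_range_succ'
        (fun k => ((m.choose k : ℕ) : ℝ) • QWT u t k (c 0 (m + 1 - k))) m]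
      have e2 : ∀ k ∈ Finset.range (m + 1),
          (((m + 1).choose (k + 1) : ℕ) : ℝ) • QWT u t (k + 1) (c 0 (m + 1 - (k + 1)))
          = (m.choose k : ℝ) • QWT u t (k + 1) (c 0 (m - k))
            + (m.choose (k + 1) : ℝ) • QWT u t (k + 1) (c 0 (m - k)) := by
        intro k hk
        have h4 : m + 1 - (k + 1) = m - k := by omega
        rw [h4, Nat.choose_succ_succ', Nat.cast_add, add_smul]
      rw [Finset.sum_congr rfl e2, Finset.sum_add_distrib]
      have e3 : ∀ k ∈ Finset.range m,
          ((m.choose (k + 1) : ℕ) : ℝ) • QWT u t (k + 1) (c 0 (m + 1 - (k + 1)))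
          = (m.choose (k + 1) : ℝ) • QWT u t (k + 1) (c 0 (m - k)) := by
        intro k hk
        have h5 : m + 1 - (k + 1) = m - k := by omega
        rw [h5]
      rw [Finset.sum_congr rfl e3]
      have e4 : ∑ k ∈ Finset.range (m + 1),
            (m.choose (k + 1) : ℝ) • QWT u t (k + 1) (c 0 (m - k))
          = ∑ k ∈ Finset.range m, (m.choose (k + 1) : ℝ) • QWT u t (k + 1) (c 0 (m - k)) := by
        rw [Finset.sum_range_succ, Nat.choose_succ_self, Nat.cast_zero, zero_smul, add_zero]
      rw [e4]
      simp only [Nat.choose_zero_right, Nat.cast_one, Nat.sub_zero, Nat.add_sub_cancel]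
      abel
  -- norm estimate for `c t m`
  have hbound : ∀ m : ℕ, ∃ K : ℝ, 0 ≤ K ∧ ∀ t : ℕ, 1 ≤ t →
      ‖c t m‖ ≤ a ^ m * (t : ℝ) ^ m + K * (t : ℝ) ^ (m - 1) := by
    intro m
    set M : ℝ := 1 + ∑ j ∈ Finset.range (m + 1), ‖u j‖ with hM_def
    have hMsum : 0 ≤ ∑ j ∈ Finset.range (m + 1), ‖u j‖ :=
      Finset.sum_nonneg fun j _ => norm_nonneg _
    have hM1 : 1 ≤ M := by rw [hM_def]; linarith
    have hM0 : 0 ≤ M := by linarith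
    have hνk : ∀ k ≤ m, ∀ j ≤ k, ν j ≤ M ^ j := by
      intro k hk j hj
      by_cases h : j = 0
      · subst h; simp [hν_def]
      · have h1 : ν j = ‖u j‖ := by simp [hν_def, h]
        have hmem : j ∈ Finset.range (m + 1) := Finset.mem_range.mpr (by omega)
        have h2 := Finset.single_le_sum (f := fun j => ‖u j‖)
          (fun i _ => norm_nonneg (u i)) hmem
        calc ν j = ‖u j‖ := h1
          _ ≤ M := by rw [hM_def]; linarith
          _ ≤ M ^ j := le_self_pow₀ hM1 h
    refine ⟨∑ k ∈ Finset.range (m + 1),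
      (m.choose k : ℝ) * ((a ^ k + (k : ℝ) ^ 2 * M ^ k) * ‖c 0 (m - k)‖), ?_, ?_⟩
    · refine Finset.sum_nonneg fun k _ => ?_
      have h0 : (0:ℝ) ≤ a ^ k + (k : ℝ) ^ 2 * M ^ k :=
        add_nonneg (pow_nonneg ha0 k)
          (mul_nonneg (sq_nonneg _) (pow_nonneg hM0 k))
      exact mul_nonneg (Nat.cast_nonneg _) (mul_nonneg h0 (norm_nonneg _))
    intro t ht
    have ht1 : (1 : ℝ) ≤ (t : ℝ) := by exact_mod_cast ht
    have ht0 : (0 : ℝ) < (t : ℝ) := by linarith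
    rw [hexp m t]
    have step1 : ‖∑ k ∈ Finset.range (m + 1), ((m.choose k : ℝ)) • QWT u t k (c 0 (m - k))‖
        ≤ ∑ k ∈ Finset.range (m + 1), (m.choose k : ℝ)
          * (((t.descFactorial k : ℝ) * a ^ k
            + ((t ^ k - t.descFactorial k : ℕ) : ℝ) * M ^ k) * ‖c 0 (m - k)‖) := by
      refine le_trans (norm_sum_le _ _) (Finset.sum_le_sum fun k hk => ?_)
      rw [norm_smul, Real.norm_eq_abs, abs_of_nonneg (Nat.cast_nonneg (m.choose k) : (0:ℝ) ≤ (m.choose k : ℝ))]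
      refine mul_le_mul_of_nonneg_left ?_ (Nat.cast_nonneg _)
      exact QWT_norm u hν hν0 ha0 hM0 t k hν1
        (hνk k (Nat.lt_succ_iff.mp (Finset.mem_range.mp hk))) (c 0 (m - k))
    refine step1.trans ?_
    have step2 : ∀ k ∈ Finset.range (m + 1), (m.choose k : ℝ)
          * (((t.descFactorial k : ℝ) * a ^ k
            + ((t ^ k - t.descFactorial k : ℕ) : ℝ) * M ^ k) * ‖c 0 (m - k)‖)
        ≤ (if k = m then a ^ m * (t : ℝ) ^ m else 0)
          + (m.choose k : ℝ) * ((a ^ k + (k : ℝ) ^ 2 * M ^ k) * ‖c 0 (m - k)‖)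
            * (t : ℝ) ^ (m - 1) := by
      intro k hk
      have hkm : k ≤ m := Nat.lt_succ_iff.mp (Finset.mem_range.mp hk)
      have hdF : (t.descFactorial k : ℝ) ≤ (t : ℝ) ^ k := by
        have := Nat.descFactorial_le_pow t k
        calc (t.descFactorial k : ℝ) ≤ ((t ^ k : ℕ) : ℝ) := by exact_mod_cast this
          _ = (t : ℝ) ^ k := by push_cast; ring
      have hbad : ((t ^ k - t.descFactorial k : ℕ) : ℝ)
          ≤ (k : ℝ) ^ 2 * (t : ℝ) ^ (k - 1) := by
        have h6 : t ^ k - t.descFactorial k ≤ k ^ 2 * t ^ (k - 1) := by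
          have := QW_pow_le_descFactorial_add t k
          omega
        calc ((t ^ k - t.descFactorial k : ℕ) : ℝ) ≤ ((k ^ 2 * t ^ (k - 1) : ℕ) : ℝ) := by
              exact_mod_cast h6
          _ = (k : ℝ) ^ 2 * (t : ℝ) ^ (k - 1) := by push_cast; ring
      rcases eq_or_ne k m with rfl | hne
      · rw [if_pos rfl]
        have hc0m : ‖c 0 (k - k)‖ = 1 := by rw [Nat.sub_self, hc00, hξ]
        rw [hc0m, Nat.choose_self]
        have hMk : (0:ℝ) ≤ M ^ k := pow_nonneg hM0 k
        have h7 : (t : ℝ) ^ (k - 1) * ((k : ℝ) ^ 2 * M ^ k)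
            ≤ (a ^ k + (k : ℝ) ^ 2 * M ^ k) * (t : ℝ) ^ (k - 1) := by
          have : (0:ℝ) ≤ a ^ k * (t : ℝ) ^ (k - 1) := by positivity
          nlinarith [pow_nonneg ht0.le (k - 1)]
        have h8 : (t.descFactorial k : ℝ) * a ^ k ≤ (t : ℝ) ^ k * a ^ k :=
          mul_le_mul_of_nonneg_right hdF (pow_nonneg ha0 k)
        have h9 : ((t ^ k - t.descFactorial k : ℕ) : ℝ) * M ^ k
            ≤ (k : ℝ) ^ 2 * (t : ℝ) ^ (k - 1) * M ^ k :=
          mul_le_mul_of_nonneg_right hbad hMk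
        push_cast
        nlinarith [pow_nonneg ht0.le (k - 1), pow_nonneg ht0.le k]
      · rw [if_neg hne]
        have hklt : k < m := lt_of_le_of_ne hkm hne
        have htk : (t : ℝ) ^ k ≤ (t : ℝ) ^ (m - 1) :=
          pow_le_pow_right₀ ht1 (by omega)
        have htk' : (t : ℝ) ^ (k - 1) ≤ (t : ℝ) ^ (m - 1) :=
          pow_le_pow_right₀ ht1 (by omega)
        rw [zero_add]
        have hch : (0:ℝ) ≤ (m.choose k : ℝ) := Nat.cast_nonneg _
        have hcn : (0:ℝ) ≤ ‖c 0 (m - k)‖ := norm_nonneg _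
        have h10 : (t.descFactorial k : ℝ) * a ^ k
            + ((t ^ k - t.descFactorial k : ℕ) : ℝ) * M ^ k
            ≤ (a ^ k + (k : ℝ) ^ 2 * M ^ k) * (t : ℝ) ^ (m - 1) := by
          have h11 : (t.descFactorial k : ℝ) * a ^ k ≤ a ^ k * (t : ℝ) ^ (m - 1) := by
            calc (t.descFactorial k : ℝ) * a ^ k ≤ (t : ℝ) ^ k * a ^ k :=
                mul_le_mul_of_nonneg_right hdF (pow_nonneg ha0 k)
              _ ≤ (t : ℝ) ^ (m - 1) * a ^ k :=
                mul_le_mul_of_nonneg_right htk (pow_nonneg ha0 k)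
              _ = a ^ k * (t : ℝ) ^ (m - 1) := by ring
          have h12 : ((t ^ k - t.descFactorial k : ℕ) : ℝ) * M ^ k
              ≤ (k : ℝ) ^ 2 * M ^ k * (t : ℝ) ^ (m - 1) := by
            calc ((t ^ k - t.descFactorial k : ℕ) : ℝ) * M ^ k
                ≤ ((k : ℝ) ^ 2 * (t : ℝ) ^ (k - 1)) * M ^ k :=
                mul_le_mul_of_nonneg_right hbad (pow_nonneg hM0 k)
              _ ≤ ((k : ℝ) ^ 2 * (t : ℝ) ^ (m - 1)) * M ^ k := by
                refine mul_le_mul_of_nonneg_right ?_ (pow_nonneg hM0 k)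
                exact mul_le_mul_of_nonneg_left htk' (by positivity)
              _ = (k : ℝ) ^ 2 * M ^ k * (t : ℝ) ^ (m - 1) := by ring
          calc (t.descFactorial k : ℝ) * a ^ k
              + ((t ^ k - t.descFactorial k : ℕ) : ℝ) * M ^ k
              ≤ a ^ k * (t : ℝ) ^ (m - 1) + (k : ℝ) ^ 2 * M ^ k * (t : ℝ) ^ (m - 1) :=
              add_le_add h11 h12
            _ = (a ^ k + (k : ℝ) ^ 2 * M ^ k) * (t : ℝ) ^ (m - 1) := by ring
        calc (m.choose k : ℝ) * (((t.descFactorial k : ℝ) * a ^ k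
              + ((t ^ k - t.descFactorial k : ℕ) : ℝ) * M ^ k) * ‖c 0 (m - k)‖)
            ≤ (m.choose k : ℝ) * (((a ^ k + (k : ℝ) ^ 2 * M ^ k) * (t : ℝ) ^ (m - 1))
              * ‖c 0 (m - k)‖) := by
              refine mul_le_mul_of_nonneg_left ?_ hch
              exact mul_le_mul_of_nonneg_right h10 hcn
          _ = (m.choose k : ℝ) * ((a ^ k + (k : ℝ) ^ 2 * M ^ k) * ‖c 0 (m - k)‖)
              * (t : ℝ) ^ (m - 1) := by ring
    refine (Finset.sum_le_sum step2).trans ?_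
    rw [Finset.sum_add_distrib]
    have e5 : ∑ k ∈ Finset.range (m + 1), (if k = m then a ^ m * (t : ℝ) ^ m else 0)
        = a ^ m * (t : ℝ) ^ m := by
      rw [Finset.sum_ite_eq' (Finset.range (m + 1)) m]
      simp
    rw [e5, ← Finset.sum_mul]
  -- moment bound
  have hmomb : ∀ m : ℕ, 1 ≤ m → ∃ K : ℝ, 0 ≤ K ∧ ∀ t : ℕ, 1 ≤ t →
      ∫ v, v ^ (2 * m) ∂(p t) ≤ a ^ (2 * m) + K / (t : ℝ) := by
    intro m hm
    obtain ⟨K, hK0, hK⟩ := hbound (2 * m)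
    refine ⟨K, hK0, fun t ht => ?_⟩
    have htpos : 0 < t := ht
    have ht1 : (1 : ℝ) ≤ (t : ℝ) := by exact_mod_cast ht
    have ht0 : (0 : ℝ) < (t : ℝ) := by linarith
    rw [hmom t (2 * m) htpos]
    have h1 : (⟪(((t : ℝ) ^ (2 * m))⁻¹ : ℝ) • c t (2 * m), (U ^ t) ξ⟫_ℂ).re
        ≤ ‖(((t : ℝ) ^ (2 * m))⁻¹ : ℝ) • c t (2 * m)‖ * ‖(U ^ t) ξ‖ := by
      refine le_trans (Complex.re_le_norm _) ?_
      exact norm_inner_le_norm _ _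
    have hnorm : ‖(U ^ t) ξ‖ = 1 := by
      rw [ContinuousLinearMap.norm_map_of_mem_unitary (pow_mem hU t), hξ]
    have htm0 : (0 : ℝ) < (t : ℝ) ^ (2 * m) := pow_pos ht0 _
    have h2 : ‖(((t : ℝ) ^ (2 * m))⁻¹ : ℝ) • c t (2 * m)‖
        = ((t : ℝ) ^ (2 * m))⁻¹ * ‖c t (2 * m)‖ := by
      rw [norm_smul, Real.norm_eq_abs, abs_of_nonneg (by positivity)]
    have h3 := hK t ht
    have h4 : ((t : ℝ) ^ (2 * m))⁻¹ * ‖c t (2 * m)‖ ≤ a ^ (2 * m) + K / (t : ℝ) := by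
      have heq : ((t : ℝ) ^ (2 * m))⁻¹
          * (a ^ (2 * m) * (t : ℝ) ^ (2 * m) + K * (t : ℝ) ^ (2 * m - 1))
          = a ^ (2 * m) + K / (t : ℝ) := by
        have h2m : 2 * m - 1 + 1 = 2 * m := by omega
        have hts : (t : ℝ) ^ (2 * m) = (t : ℝ) ^ (2 * m - 1) * (t : ℝ) := by
          rw [← pow_succ, h2m]
        have htm1 : (0 : ℝ) < (t : ℝ) ^ (2 * m - 1) := pow_pos ht0 _
        rw [hts]
        field_simp
      calc ((t : ℝ) ^ (2 * m))⁻¹ * ‖c t (2 * m)‖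
          ≤ ((t : ℝ) ^ (2 * m))⁻¹
            * (a ^ (2 * m) * (t : ℝ) ^ (2 * m) + K * (t : ℝ) ^ (2 * m - 1)) :=
            mul_le_mul_of_nonneg_left h3 (inv_nonneg.mpr htm0.le)
        _ = a ^ (2 * m) + K / (t : ℝ) := heq
    calc (⟪(((t : ℝ) ^ (2 * m))⁻¹ : ℝ) • c t (2 * m), (U ^ t) ξ⟫_ℂ).re
        ≤ ‖(((t : ℝ) ^ (2 * m))⁻¹ : ℝ) • c t (2 * m)‖ * ‖(U ^ t) ξ‖ := h1
      _ = ((t : ℝ) ^ (2 * m))⁻¹ * ‖c t (2 * m)‖ := by rw [h2, hnorm, mul_one]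
      _ ≤ a ^ (2 * m) + K / (t : ℝ) := h4
  -- Chebyshev
  have hcheb : ∀ L : ℝ, 0 < L → ∀ m t : ℕ,
      L ^ (2 * m) * (p t (Set.Iic (-L) ∪ Set.Ici L)).toReal
        ≤ ∫ v, v ^ (2 * m) ∂(p t) := by
    intro L hL m t
    have hsub : (Set.Iic (-L) ∪ Set.Ici L) ⊆ {v : ℝ | L ^ (2 * m) ≤ v ^ (2 * m)} := by
      intro v hv
      have habs : L ≤ |v| := by
        rcases hv with h | h
        · rw [Set.mem_Iic] at h
          calc L ≤ -v := by linarith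
            _ ≤ |v| := neg_le_abs v
        · rw [Set.mem_Ici] at h
          exact le_trans h (le_abs_self v)
      show L ^ (2 * m) ≤ v ^ (2 * m)
      calc L ^ (2 * m) ≤ |v| ^ (2 * m) := pow_le_pow_left₀ hL.le habs _
        _ = v ^ (2 * m) := Even.pow_abs (even_two_mul m) v
    have hinst := hp t
    have h1 := mul_meas_ge_le_integral_of_nonneg (μ := p t)
      (f := fun v : ℝ => v ^ (2 * m))
      (Filter.Eventually.of_forall fun v => by
        show (0 : ℝ) ≤ v ^ (2 * m)
        rw [pow_mul]; exact pow_nonneg (sq_nonneg v) m)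
      (hpint t (2 * m)) (L ^ (2 * m))
    have h2 : (p t (Set.Iic (-L) ∪ Set.Ici L)).toReal
        ≤ (p t {v : ℝ | L ^ (2 * m) ≤ v ^ (2 * m)}).toReal :=
      ENNReal.toReal_mono (measure_ne_top _ _) (measure_mono hsub)
    calc L ^ (2 * m) * (p t (Set.Iic (-L) ∪ Set.Ici L)).toReal
        ≤ L ^ (2 * m) * (p t {v : ℝ | L ^ (2 * m) ≤ v ^ (2 * m)}).toReal :=
          mul_le_mul_of_nonneg_left h2 (le_of_lt (pow_pos hL _))
      _ ≤ ∫ v, v ^ (2 * m) ∂(p t) := h1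
  -- Part 1
  have part1 : ∀ L : ℝ, a < L →
      Tendsto (fun t : ℕ => p t (Set.Iic (-L) ∪ Set.Ici L)) atTop (nhds 0) := by
    intro L hL
    have hL0 : 0 < L := lt_of_le_of_lt ha0 hL
    rw [ENNReal.tendsto_nhds_zero]
    intro ε hε
    obtain ⟨δ, hδ0, hδε⟩ : ∃ δ : ℝ, 0 < δ ∧ ENNReal.ofReal δ ≤ ε := by
      rcases eq_or_ne ε ⊤ with h | h
      · exact ⟨1, one_pos, by simp [h]⟩
      · exact ⟨ε.toReal, ENNReal.toReal_pos hε.ne' h, by rw [ENNReal.ofReal_toReal h]⟩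
    have hr0 : (0:ℝ) ≤ a / L := div_nonneg ha0 hL0.le
    have hr1 : a / L < 1 := (div_lt_one hL0).mpr hL
    obtain ⟨n, hn⟩ : ∃ n : ℕ, (a / L) ^ n < δ / 2 :=
      ((tendsto_pow_atTop_nhds_zero_of_lt_one hr0 hr1).eventually
        (gt_mem_nhds (by positivity))).exists
    obtain ⟨K, hK0, hK⟩ := hmomb (n + 1) (Nat.le_add_left 1 n)
    set m : ℕ := n + 1 with hm_def
    have hrm : (a / L) ^ (2 * m) ≤ (a / L) ^ n :=
      pow_le_pow_of_le_one hr0 hr1.le (by omega)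
    have hLm : (0:ℝ) < L ^ (2 * m) := pow_pos hL0 _
    obtain ⟨T, hT⟩ := exists_nat_gt (2 * K / (δ * L ^ (2 * m)))
    filter_upwards [eventually_ge_atTop (max T 1)] with t ht
    have ht1 : 1 ≤ t := le_trans (le_max_right T 1) ht
    have htT : T ≤ t := le_trans (le_max_left T 1) ht
    have ht1' : (1 : ℝ) ≤ (t : ℝ) := by exact_mod_cast ht1
    have ht0' : (0 : ℝ) < (t : ℝ) := by linarith
    have hint := hK t ht1
    have hch := hcheb L hL0 m t
    have h1 : (p t (Set.Iic (-L) ∪ Set.Ici L)).toReal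
        ≤ (a ^ (2 * m) + K / (t : ℝ)) / L ^ (2 * m) := by
      rw [le_div_iff₀ hLm]
      calc (p t (Set.Iic (-L) ∪ Set.Ici L)).toReal * L ^ (2 * m)
          = L ^ (2 * m) * (p t (Set.Iic (-L) ∪ Set.Ici L)).toReal := by ring
        _ ≤ ∫ v, v ^ (2 * m) ∂(p t) := hch
        _ ≤ a ^ (2 * m) + K / (t : ℝ) := hint
    have h2 : (a ^ (2 * m) + K / (t : ℝ)) / L ^ (2 * m) ≤ δ := by
      have hTt : 2 * K / (δ * L ^ (2 * m)) < (t : ℝ) :=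
        lt_of_lt_of_le hT (Nat.cast_le.mpr htT)
      have hprod : 2 * K < (t : ℝ) * (δ * L ^ (2 * m)) := by
        rwa [div_lt_iff₀ (mul_pos hδ0 hLm)] at hTt
      have ha' : a ^ (2 * m) / L ^ (2 * m) ≤ δ / 2 := by
        rw [← div_pow]
        exact le_of_lt (lt_of_le_of_lt hrm hn)
      have hb' : K / (t : ℝ) / L ^ (2 * m) ≤ δ / 2 := by
        rw [div_div, div_le_iff₀ (mul_pos ht0' hLm)]
        nlinarith
      calc (a ^ (2 * m) + K / (t : ℝ)) / L ^ (2 * m)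
          = a ^ (2 * m) / L ^ (2 * m) + K / (t : ℝ) / L ^ (2 * m) := by
            rw [add_div]
        _ ≤ δ / 2 + δ / 2 := add_le_add ha' hb'
        _ = δ := by ring
    have hfin : p t (Set.Iic (-L) ∪ Set.Ici L) ≠ ⊤ := measure_ne_top _ _
    calc p t (Set.Iic (-L) ∪ Set.Ici L)
        = ENNReal.ofReal ((p t (Set.Iic (-L) ∪ Set.Ici L)).toReal) :=
          (ENNReal.ofReal_toReal hfin).symm
      _ ≤ ENNReal.ofReal δ := ENNReal.ofReal_le_ofReal (h1.trans h2)
      _ ≤ ε := hδε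
  refine ⟨part1, ?_⟩
  -- Part 2
  intro q hq hconv
  set P : ℕ → ProbabilityMeasure ℝ := fun t => ⟨p t, hp t⟩ with hP
  set Q : ProbabilityMeasure ℝ := ⟨q, hq⟩ with hQ
  have hPQ : Tendsto P atTop (nhds Q) :=
    ProbabilityMeasure.tendsto_iff_forall_integral_tendsto.mpr fun f => hconv f
  have key : ∀ L : ℝ, a < L → q (Set.Icc (-L) L)ᶜ = 0 := by
    intro L hL
    have hopen : IsOpen (Set.Icc (-L) L)ᶜ := isClosed_Icc.isOpen_compl
    have h1 := ProbabilityMeasure.le_liminf_measure_open_of_tendsto hPQ hopen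
    have hsub : (Set.Icc (-L) L)ᶜ ⊆ Set.Iic (-L) ∪ Set.Ici L := by
      intro v hv
      simp only [Set.mem_compl_iff, Set.mem_Icc, not_and_or, not_le] at hv
      rcases hv with h | h
      · exact Or.inl (Set.mem_Iic.mpr (le_of_lt h))
      · exact Or.inr (Set.mem_Ici.mpr (le_of_lt h))
    have h2 : Tendsto (fun t => (P t : Measure ℝ) (Set.Icc (-L) L)ᶜ) atTop (nhds 0) := by
      refine tendsto_of_tendsto_of_tendsto_of_le_of_le tendsto_const_nhds (part1 L hL)
        (fun t => zero_le) (fun t => measure_mono hsub)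
    have h3 : liminf (fun t => (P t : Measure ℝ) (Set.Icc (-L) L)ᶜ) atTop = 0 :=
      h2.liminf_eq
    rw [h3] at h1
    exact le_antisymm h1 zero_le
  have hUnion : (Set.Icc (-a) a)ᶜ
      = ⋃ n : ℕ, (Set.Icc (-(a + ((n : ℝ) + 1)⁻¹)) (a + ((n : ℝ) + 1)⁻¹))ᶜ := by
    ext v
    simp only [Set.mem_compl_iff, Set.mem_Icc, Set.mem_iUnion, not_and_or, not_le]
    constructor
    · rintro (h | h)
      · obtain ⟨n, hn⟩ := exists_nat_one_div_lt (show (0:ℝ) < -a - v by linarith)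
        rw [one_div] at hn
        exact ⟨n, Or.inl (by linarith)⟩
      · obtain ⟨n, hn⟩ := exists_nat_one_div_lt (show (0:ℝ) < v - a by linarith)
        rw [one_div] at hn
        exact ⟨n, Or.inr (by linarith)⟩
    · rintro ⟨n, h | h⟩
      · have hpos : (0:ℝ) < ((n : ℝ) + 1)⁻¹ := by positivity
        exact Or.inl (by linarith)
      · have hpos : (0:ℝ) < ((n : ℝ) + 1)⁻¹ := by positivity
        exact Or.inr (by linarith)
  rw [hUnion]
  refine measure_iUnion_null fun n => key _ ?_
  have hpos : (0:ℝ) < ((n : ℝ) + 1)⁻¹ := by positivity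
  linarith
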